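/- Under the assumptions of the productive-risk setup (1_M ∉ T(R), not all eⱼ equal), there exist constants e₀ ∈ R, e_F > 0 and a unit vector u₁ ∈ T(Z) such that for every r = z + 1_M·e in the flat F(R) (with e = ⟨1_M,r⟩_ω, z the risk component), e = e₀ + e_F·⟨u₁, z⟩_ω. -/

import Mathlib

open scoped RealInnerProductSpace

lemma shift_sum {n : ℕ} (c g : Fin n → ℝ) (j₀ : Fin n) :
    ∑ j, (c j - (if j = j₀ then ∑ k, c k else 0)) * g j = ∑ j, c j * (g j - g j₀) := by
  simp only [sub_mul, mul_sub, Finset.sum_sub_distrib, ite_mul, zero_mul,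
    Finset.sum_ite_eq', Finset.mem_univ, if_true, Finset.sum_mul]

lemma shift_sum0 {n : ℕ} (c : Fin n → ℝ) (j₀ : Fin n) :
    ∑ j, (c j - (if j = j₀ then ∑ k, c k else 0)) = 0 := by
  simp [Finset.sum_sub_distrib, Finset.sum_ite_eq']

theorem stmt_11 (M n : ℕ) (ω : Fin M → ℝ)
    (hω : ∀ i, 0 < ω i) (hsum : ∑ i, ω i = 1)
    (r : Fin n → Fin M → ℝ)
    (e : Fin n → ℝ) (he : ∀ j, e j = ∑ i, ω i * 1 * r j i)
    (z : Fin n → Fin M → ℝ) (hz : ∀ j, z j = fun i => r j i - 1 * e j)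
    (hone : (fun _ : Fin M => (1 : ℝ)) ∉
      {x | ∃ t : Fin n → ℝ, ∑ j, t j = 0 ∧ x = ∑ j, t j • r j})
    (hne : ∃ j k, e j ≠ e k) :
    ∃ (e₀ eF : ℝ) (u₁ : Fin M → ℝ), 0 < eF ∧
      (∃ t : Fin n → ℝ, ∑ j, t j = 0 ∧ u₁ = ∑ j, t j • z j) ∧
      (∑ i, ω i * u₁ i * u₁ i = 1) ∧
      ∀ t : Fin n → ℝ, ∑ j, t j = 1 →
        ∀ rt : Fin M → ℝ, rt = ∑ j, t j • r j →
        ∀ et : ℝ, et = ∑ i, ω i * 1 * rt i →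
        ∀ zt : Fin M → ℝ, zt = (fun i => rt i - 1 * et) →
        et = e₀ + eF * ∑ i, ω i * u₁ i * zt i := by
  classical
  obtain ⟨j₀, k₀, hjk⟩ := hne
  set sq : Fin M → ℝ := fun i => Real.sqrt (ω i) with hsqdef
  have hsqpos : ∀ i, 0 < sq i := fun i => Real.sqrt_pos.2 (hω i)
  have hsqsq : ∀ i, sq i * sq i = ω i := fun i => Real.mul_self_sqrt (hω i).le
  have hinnerM : ∀ x y : EuclideanSpace ℝ (Fin M), ⟪x, y⟫ = ∑ i, x i * y i := by
    intro x y; simp [PiLp.inner_apply, RCLike.inner_apply, starRingEnd_apply, mul_comm]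
  have hinnerN : ∀ x y : EuclideanSpace ℝ (Fin n), ⟪x, y⟫ = ∑ j, x j * y j := by
    intro x y; simp [PiLp.inner_apply, RCLike.inner_apply, starRingEnd_apply, mul_comm]
  -- the linear map A
  let A : EuclideanSpace ℝ (Fin n) →ₗ[ℝ] EuclideanSpace ℝ (Fin M) :=
  { toFun := fun c => WithLp.toLp 2 (fun i => ∑ j, c j * (sq i * (z j i - z j₀ i)))
    map_add' := by
      intro a b; ext i
      simp [add_mul, Finset.sum_add_distrib]
    map_smul' := by
      intro m a; ext i
      simp [Finset.mul_sum, mul_assoc] }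
  have hA : ∀ (c : EuclideanSpace ℝ (Fin n)) (i : Fin M),
      A c i = ∑ j, c j * (sq i * (z j i - z j₀ i)) := fun c i => rfl
  -- r j i = z j i + e j
  have hr : ∀ j i, r j i = z j i + e j := by
    intro j i; have := congrFun (hz j) i; simp at this; linarith
  -- well-definedness: kernel of A kills the functional
  have hker : ∀ c : EuclideanSpace ℝ (Fin n), A c = 0 →
      ∑ j, c j * (e j - e j₀) = 0 := by
    intro c hc
    have hzc : ∀ i, ∑ j, c j * (z j i - z j₀ i) = 0 := by
      intro i
      have h1 : ∑ j, c j * (sq i * (z j i - z j₀ i)) = 0 := by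
        have := congrArg (fun x => x i) hc; simpa [hA] using this
      have h2 : sq i * ∑ j, c j * (z j i - z j₀ i) = 0 := by
        rw [Finset.mul_sum]; rw [← h1]; apply Finset.sum_congr rfl; intros; ring
      exact (mul_eq_zero.mp h2).resolve_left (hsqpos i).ne'
    by_contra hS
    set S := ∑ j, c j * (e j - e j₀) with hSdef
    set s : Fin n → ℝ := fun j => c j - (if j = j₀ then ∑ k, c k else 0) with hsdef
    have hssum : ∑ j, s j = 0 := shift_sum0 c j₀
    have hsz : ∀ i, ∑ j, s j * z j i = 0 := by
      intro i; rw [hsdef]; rw [shift_sum c (fun j => z j i) j₀]; exact hzc i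
    have hse : ∑ j, s j * e j = S := by
      rw [hsdef]; rw [shift_sum c e j₀]
    apply hone
    refine ⟨fun j => S⁻¹ * s j, ?_, ?_⟩
    · rw [← Finset.mul_sum, hssum, mul_zero]
    · funext i
      have : (∑ j, (fun j => S⁻¹ * s j) j • r j) i = ∑ j, S⁻¹ * s j * r j i := by
        simp [Finset.sum_apply]
      rw [this]
      have : ∑ j, S⁻¹ * s j * r j i = S⁻¹ * ∑ j, s j * r j i := by
        rw [Finset.mul_sum]; apply Finset.sum_congr rfl; intros; ring
      rw [this]
      have : ∑ j, s j * r j i = S := by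
        have : ∑ j, s j * r j i = ∑ j, (s j * z j i + s j * e j) := by
          apply Finset.sum_congr rfl; intro j _; rw [hr j i]; ring
        rw [this, Finset.sum_add_distrib, hsz i, hse, zero_add]
      rw [this, inv_mul_cancel₀ hS]
  -- the Riesz vector
  set d : EuclideanSpace ℝ (Fin n) := WithLp.toLp 2 (fun j => e j - e j₀) with hddef
  set K := LinearMap.range (LinearMap.adjoint A) with hKdef
  have horth : Kᗮ = LinearMap.ker A := by
    ext c
    simp only [Submodule.mem_orthogonal, LinearMap.mem_ker, hKdef, LinearMap.mem_range]
    constructor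
    · intro h
      have h2 : ⟪A c, A c⟫ = 0 := by
        rw [← LinearMap.adjoint_inner_left]
        exact h _ ⟨A c, rfl⟩
      rwa [inner_self_eq_zero] at h2
    · rintro h u ⟨y, rfl⟩
      rw [LinearMap.adjoint_inner_left, h, inner_zero_right]
  have hdK : d ∈ K := by
    rw [← Submodule.orthogonal_orthogonal K, horth]
    intro c hc
    rw [hinnerN]
    have := hker c hc
    simpa [hddef] using this
  obtain ⟨y, hy⟩ := hdK
  set R := LinearMap.range A with hRdef
  set v : EuclideanSpace ℝ (Fin M) := (R.orthogonalProjectionOnto y : EuclideanSpace ℝ (Fin M)) with hvdef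
  have hvR : v ∈ R := Submodule.coe_mem _
  have hvA : ∀ c : EuclideanSpace ℝ (Fin n), ⟪v, A c⟫ = ∑ j, c j * (e j - e j₀) := by
    intro c
    have h1 : ⟪y - v, A c⟫ = 0 := by
      have hmem := Submodule.sub_starProjection_mem_orthogonal (K := R) y
      exact (Submodule.mem_orthogonal' R _).mp hmem (A c) ⟨c, rfl⟩
    have h2 : ⟪y, A c⟫ = ⟪v, A c⟫ := by
      have := inner_sub_left (𝕜 := ℝ) y v (A c); rw [h1] at this; linarith
    rw [← h2, ← LinearMap.adjoint_inner_left, hy, hinnerN]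
    apply Finset.sum_congr rfl; intro j _; rw [hddef]; ring
  -- v as plain sums
  have hvA' : ∀ c : Fin n → ℝ,
      ∑ i, v i * ∑ j, c j * (sq i * (z j i - z j₀ i)) = ∑ j, c j * (e j - e j₀) := by
    intro c
    have h := hvA (WithLp.toLp 2 c); rw [hinnerM] at h; exact h
  obtain ⟨cv, hcv⟩ := hvR
  have hcv' : ∀ i, v i = ∑ j, cv j * (sq i * (z j i - z j₀ i)) := by
    intro i; rw [← hcv, hA]
  -- v ≠ 0
  have hvne : v ≠ 0 := by
    intro h0
    have h1 := hvA' (Pi.single k₀ 1)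
    rw [h0] at h1
    simp [Pi.single_apply, ite_mul] at h1
    exact hjk (by linarith)
  have hN : (0:ℝ) < ‖v‖ := norm_pos_iff.mpr hvne
  set N := ‖v‖ with hNdef
  have hvv : ∑ i, v i * v i = N * N := by
    rw [← hinnerM v v, real_inner_self_eq_norm_mul_norm]
  -- the unit vector
  set u₁ : Fin M → ℝ := fun i => ∑ j, (N⁻¹ * cv j) * (z j i - z j₀ i) with hu₁def
  have hsqu : ∀ i, sq i * u₁ i = N⁻¹ * v i := by
    intro i
    rw [hu₁def, hcv' i, Finset.mul_sum, Finset.mul_sum]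
    apply Finset.sum_congr rfl; intro j _; ring
  refine ⟨e j₀ - ∑ i, v i * (sq i * z j₀ i), N, u₁, hN, ?_, ?_, ?_⟩
  · -- membership in T(Z)
    refine ⟨fun j => N⁻¹ * cv j - (if j = j₀ then ∑ k, N⁻¹ * cv k else 0),
      shift_sum0 _ j₀, ?_⟩
    funext i
    have h1 : (∑ j, (fun j => N⁻¹ * cv j - (if j = j₀ then ∑ k, N⁻¹ * cv k else 0)) j • z j) i
        = ∑ j, (N⁻¹ * cv j - (if j = j₀ then ∑ k, N⁻¹ * cv k else 0)) * z j i := by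
      simp [Finset.sum_apply]
    rw [h1, shift_sum (fun j => N⁻¹ * cv j) (fun j => z j i) j₀]
  · -- unit norm
    have h1 : ∀ i, ω i * u₁ i * u₁ i = (N⁻¹ * v i) * (N⁻¹ * v i) := by
      intro i
      have : ω i * u₁ i * u₁ i = (sq i * u₁ i) * (sq i * u₁ i) := by
        rw [← hsqsq i]; ring
      rw [this, hsqu i]
    rw [Finset.sum_congr rfl (fun i _ => h1 i)]
    have h2 : ∑ i, (N⁻¹ * v i) * (N⁻¹ * v i) = N⁻¹ * N⁻¹ * ∑ i, v i * v i := by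
      rw [Finset.mul_sum]; apply Finset.sum_congr rfl; intro i _; ring
    rw [h2, hvv]
    field_simp
  · -- the affine formula
    intro t ht rt hrt et het zt hzt
    have hrt' : ∀ i, rt i = ∑ j, t j * r j i := by
      intro i; rw [hrt]; simp [Finset.sum_apply]
    have het' : et = ∑ j, t j * e j := by
      rw [het]
      have h1 : ∀ i, ω i * 1 * rt i = ∑ j, t j * (ω i * 1 * r j i) := by
        intro i; rw [hrt' i, Finset.mul_sum]
        apply Finset.sum_congr rfl; intro j _; ring
      rw [Finset.sum_congr rfl (fun i _ => h1 i), Finset.sum_comm]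
      apply Finset.sum_congr rfl; intro j _
      rw [← Finset.mul_sum, ← he j]
    have hzt' : ∀ i, zt i = ∑ j, t j * z j i := by
      intro i
      have h0 : zt i = rt i - 1 * et := by rw [hzt]
      rw [h0, hrt' i, het', one_mul, ← Finset.sum_sub_distrib]
      apply Finset.sum_congr rfl; intro j _
      have := congrFun (hz j) i
      rw [this]; ring
    have hq : ∀ i, v i * (sq i * zt i)
        = v i * (sq i * z j₀ i) + v i * ∑ j, t j * (sq i * (z j i - z j₀ i)) := by
      intro i
      have h1 : ∑ j, t j * (sq i * (z j i - z j₀ i))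
          = sq i * (∑ j, t j * z j i) - sq i * z j₀ i := by
        have h2 : ∑ j, t j * (sq i * (z j i - z j₀ i))
            = ∑ j, (sq i * (t j * z j i) - (sq i * z j₀ i) * t j) := by
          apply Finset.sum_congr rfl; intro j _; ring
        rw [h2, Finset.sum_sub_distrib, ← Finset.mul_sum, ← Finset.mul_sum, ht, mul_one]
      rw [hzt' i, h1]; ring
    have hmain : ∑ i, v i * (sq i * zt i)
        = (∑ i, v i * (sq i * z j₀ i)) + (et - e j₀) := by
      rw [Finset.sum_congr rfl (fun i _ => hq i), Finset.sum_add_distrib, hvA' t]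
      congr 1
      have h3 : ∑ j, t j * (e j - e j₀) = (∑ j, t j * e j) - (∑ j, t j) * e j₀ := by
        rw [Finset.sum_mul, ← Finset.sum_sub_distrib]
        apply Finset.sum_congr rfl; intro j _; ring
      rw [h3, ht, het', one_mul]
    have hcd : ∑ i, ω i * u₁ i * zt i = N⁻¹ * ∑ i, v i * (sq i * zt i) := by
      rw [Finset.mul_sum]; apply Finset.sum_congr rfl; intro i _
      have h4 : ω i * u₁ i * zt i = (sq i * u₁ i) * (sq i * zt i) := by
        rw [← hsqsq i]; ring
      rw [h4, hsqu i]; ring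
    rw [hcd, hmain, ← mul_assoc, mul_inv_cancel₀ hN.ne', one_mul]
    ring
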